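/- Suppose P ∈ [0,1). Let μ = Σ_{j=1}^{N} f_j · δ_{v_j} be a weak stationary solution of the δ model with 0 ≤ v_1 < v_2 < … < v_N ≤ V_max, f_j > 0 for every j, Σ_{j=1}^{N} f_j = ρ, and v_1 < V_max. Then necessarily P < 1/2 and the mass carried by the lowest velocity equals f_1 = ρ·(1−2P)/(1−P). -/

import Mathlib

open MeasureTheory

/-- The δ-model transition kernel: for pre-interaction speeds `vs` (candidate) and
`vf` (field), the probability measure
`A_δ(vs,vf) = (1−P)·δ_{min(vs,vf)} + P·δ_{min(vs+Δv, Vmax)}`. -/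
noncomputable def deltaKernel (Vmax Δv P : ℝ) (vs vf : ℝ) : Measure ℝ :=
  ENNReal.ofReal (1 - P) • Measure.dirac (min vs vf)
    + ENNReal.ofReal P • Measure.dirac (min (vs + Δv) Vmax)

/-- `μ` is a weak stationary solution of the δ model: for every continuous test
function `φ`, `∫∫ (∫ φ dA_δ(v_*,v^*)) dμ(v_*) dμ(v^*) = ρ ∫ φ dμ`. -/
def IsWeakStationaryDelta (Vmax Δv ρ P : ℝ) (μ : Measure ℝ) : Prop :=
  ∀ φ : ℝ → ℝ, Continuous φ →
    (∫ vf, ∫ vs, (∫ v, φ v ∂(deltaKernel Vmax Δv P vs vf)) ∂μ ∂μ) = ρ * ∫ v, φ v ∂μ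

lemma integrable_smul_dirac {g : ℝ → ℝ} (hg : Measurable g) (c : ℝ) (a : ℝ) :
    Integrable g (ENNReal.ofReal c • Measure.dirac a) := by
  constructor
  · exact hg.aestronglyMeasurable
  · rw [HasFiniteIntegral, lintegral_smul_measure, lintegral_dirac' _ hg.enorm]
    exact ENNReal.mul_lt_top ENNReal.ofReal_lt_top (by simp)

lemma int_musum {N : ℕ} (v f : Fin N → ℝ) (hf : ∀ j, 0 ≤ f j) {g : ℝ → ℝ}
    (hg : Measurable g) :
    ∫ x, g x ∂(∑ j, ENNReal.ofReal (f j) • Measure.dirac (v j)) = ∑ j, f j * g (v j) := by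
  rw [integral_finset_sum_measure (fun j _ => integrable_smul_dirac hg (f j) (v j))]
  simp [integral_smul_measure, integral_dirac, fun j => ENNReal.toReal_ofReal (hf j),
    smul_eq_mul]

lemma int_kernel (Vmax Δv P : ℝ) (hP0 : 0 ≤ P) (hP1 : P ≤ 1) {φ : ℝ → ℝ}
    (hφ : Measurable φ) (vs vf : ℝ) :
    ∫ x, φ x ∂(deltaKernel Vmax Δv P vs vf)
      = (1 - P) * φ (min vs vf) + P * φ (min (vs + Δv) Vmax) := by
  rw [deltaKernel, integral_add_measure (integrable_smul_dirac hφ _ _)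
    (integrable_smul_dirac hφ _ _)]
  simp [integral_smul_measure, integral_dirac, ENNReal.toReal_ofReal hP0,
    ENNReal.toReal_ofReal (by linarith : (0:ℝ) ≤ 1 - P), smul_eq_mul]

theorem statement4 (Vmax Δv ρ P : ℝ)
    (hV : 0 < Vmax) (hΔ : 0 < Δv) (hρ : 0 < ρ) (hP0 : 0 ≤ P) (hP1 : P < 1)
    (N : ℕ) (hN : 0 < N) (v f : Fin N → ℝ)
    (hv0 : 0 ≤ v ⟨0, hN⟩) (hmono : StrictMono v) (hvle : ∀ j, v j ≤ Vmax)
    (hv1 : v ⟨0, hN⟩ < Vmax)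
    (hf : ∀ j, 0 < f j) (hmass : ∑ j, f j = ρ)
    (hstat : IsWeakStationaryDelta Vmax Δv ρ P
      (∑ j, ENNReal.ofReal (f j) • Measure.dirac (v j))) :
    P < 1 / 2 ∧ f ⟨0, hN⟩ = ρ * (1 - 2 * P) / (1 - P) := by
  set i0 : Fin N := ⟨0, hN⟩ with hi0
  have hi0le : ∀ k, i0 ≤ k := fun k => by simp [hi0, Fin.le_def]
  have hi0lt : ∀ k, k ≠ i0 → i0 < k := fun k hk => by
    rcases lt_or_eq_of_le (hi0le k) with h | h
    · exact h
    · exact absurd h.symm hk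
  -- the gap ε
  set ε : ℝ := Finset.univ.inf' ⟨i0, Finset.mem_univ i0⟩
    (fun k => if k = i0 then min Δv (Vmax - v i0) else v k - v i0) with hε
  have hεpos : 0 < ε := by
    rw [hε]; refine (Finset.lt_inf'_iff (H := _)).2 ?_
    intro k _
    by_cases hk : k = i0
    · simp [hk, hΔ, hv1, sub_pos]
    · simp [hk, sub_pos.2 (hmono (hi0lt k hk))]
  have hεle : ∀ k, ε ≤ if k = i0 then min Δv (Vmax - v i0) else v k - v i0 := fun k =>
    Finset.inf'_le _ (Finset.mem_univ k)
  have hεΔ : ε ≤ Δv := le_trans (by simpa using hεle i0) (min_le_left _ _)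
  have hεV : ε ≤ Vmax - v i0 := le_trans (by simpa using hεle i0) (min_le_right _ _)
  have hεk : ∀ k, k ≠ i0 → ε ≤ v k - v i0 := fun k hk => by simpa [hk] using hεle k
  -- the test function
  set φ : ℝ → ℝ := fun x => max 0 (1 - (x - v i0) / ε) with hφ
  have hφc : Continuous φ := by
    apply continuous_const.max
    fun_prop
  have hφm : Measurable φ := hφc.measurable
  have hφ1 : φ (v i0) = 1 := by simp [hφ]
  have hφ0 : ∀ x, v i0 + ε ≤ x → φ x = 0 := by
    intro x hx
    have h1 : (1 : ℝ) ≤ (x - v i0) / ε := (one_le_div hεpos).2 (by linarith)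
    simp only [hφ]
    rw [max_eq_left (by linarith)]
  -- values of φ at the relevant points
  have hjump : ∀ i, φ (min (v i + Δv) Vmax) = 0 := by
    intro i
    apply hφ0
    apply le_min
    · have := (hmono.monotone (hi0le i))
      linarith
    · linarith
  have hminval : ∀ i j, φ (min (v i) (v j)) = if i = i0 ∨ j = i0 then (1:ℝ) else 0 := by
    intro i j
    by_cases hij : i = i0 ∨ j = i0
    · rcases hij with h | h
      · rw [h, min_eq_left (hmono.monotone (hi0le j))]; simp [hφ1]
      · rw [h, min_eq_right (hmono.monotone (hi0le i))]; simp [hφ1]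
    · push_neg at hij
      rw [if_neg (by tauto)]
      apply hφ0
      apply le_min
      · linarith [hεk i hij.1]
      · linarith [hεk j hij.2]
  have hφvk : ∀ k, φ (v k) = if k = i0 then (1:ℝ) else 0 := by
    intro k
    have := hminval k k
    simpa using this
  have hfnn : ∀ j, 0 ≤ f j := fun j => (hf j).le
  -- stationarity with φ
  have key := hstat φ hφc
  simp only [int_kernel Vmax Δv P hP0 hP1.le hφm] at key
  have hinner : ∀ vf : ℝ,
      ∫ vs, ((1 - P) * φ (min vs vf) + P * φ (min (vs + Δv) Vmax))
        ∂(∑ j, ENNReal.ofReal (f j) • Measure.dirac (v j))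
      = ∑ i, f i * ((1 - P) * φ (min (v i) vf) + P * φ (min (v i + Δv) Vmax)) := by
    intro vf
    exact int_musum v f hfnn (by fun_prop)
  simp only [hinner] at key
  rw [int_musum v f hfnn (g := fun vf =>
      ∑ i, f i * ((1 - P) * φ (min (v i) vf) + P * φ (min (v i + Δv) Vmax)))
      (by fun_prop),
    int_musum v f hfnn hφm] at key
  simp only [hjump, hminval, hφvk, mul_zero, add_zero] at key
  -- simplify the sums
  have hrhs : ∑ k, f k * (if k = i0 then (1:ℝ) else 0) = f i0 := by
    simp [mul_ite, Finset.sum_ite_eq']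
  have hcj : ∀ j : Fin N,
      (∑ i, f i * ((1 - P) * (if i = i0 ∨ j = i0 then (1:ℝ) else 0)))
        = (1 - P) * (if j = i0 then ρ else f i0) := by
    intro j
    by_cases hj : j = i0
    · simp only [hj, or_true, if_true, mul_one, ← Finset.sum_mul, hmass]
      ring
    · simp only [hj, or_false, if_false, mul_ite, mul_one, mul_zero, Finset.sum_ite_eq']
      simp [Finset.mem_univ]
      ring
  simp only [hcj, hrhs] at key
  have hsum : ∑ j, f j * ((1 - P) * (if j = i0 then ρ else f i0))
      = (1 - P) * (f i0 * (2 * ρ - f i0)) := by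
    have hterm : ∀ j : Fin N, f j * ((1 - P) * (if j = i0 then ρ else f i0))
        = (1 - P) * f i0 * f j + (if j = i0 then (1 - P) * f i0 * (ρ - f i0) else 0) := by
      intro j
      by_cases hj : j = i0 <;> simp [hj] <;> ring
    rw [Finset.sum_congr rfl fun j _ => hterm j, Finset.sum_add_distrib,
      Finset.sum_ite_eq', ← Finset.mul_sum, hmass]
    simp [Finset.mem_univ]
    ring
  rw [hsum] at key
  -- key : (1 - P) * (f i0 * (2 * ρ - f i0)) = ρ * f i0
  have hf0 := hf i0
  have h1P : 0 < 1 - P := by linarith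
  have heq : (1 - P) * (2 * ρ - f i0) = ρ := by
    have := key
    field_simp at this ⊢
    nlinarith [this]
  have hPhalf : P < 1 / 2 := by nlinarith [mul_pos h1P hf0]
  refine ⟨hPhalf, ?_⟩
  have : f i0 = ρ * (1 - 2 * P) / (1 - P) := by
    field_simp
    nlinarith [heq]
  simpa [hi0] using this
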